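/- For real symmetric positive semi-definite m×m matrices A and B, ‖A^{1/2} − B^{1/2}‖_F² ≤ m · ‖A − B‖_F. -/

import Mathlib

open Classical Matrix

/-- The positive semidefinite square root of a real matrix (junk value `0` if not PSD). -/
noncomputable def psdSqrt {n : ℕ} (A : Matrix (Fin n) (Fin n) ℝ) : Matrix (Fin n) (Fin n) ℝ :=
  if h : A.PosSemidef then
    h.1.eigenvectorUnitary.1 * diagonal (fun i => Real.sqrt (h.1.eigenvalues i)) *
      (star h.1.eigenvectorUnitary : Matrix (Fin n) (Fin n) ℝ)
  else 0

private lemma psdSqrt_posSemidef {n : ℕ} {A : Matrix (Fin n) (Fin n) ℝ} (hA : A.PosSemidef) :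
    (psdSqrt A).PosSemidef := by
  rw [psdSqrt, dif_pos hA]
  have hD : (diagonal (fun i => Real.sqrt (hA.1.eigenvalues i))).PosSemidef :=
    posSemidef_diagonal_iff.mpr fun i => Real.sqrt_nonneg _
  have := hD.mul_mul_conjTranspose_same (hA.1.eigenvectorUnitary.1)
  simpa [star_eq_conjTranspose] using this

private lemma psdSqrt_mul_self {n : ℕ} {A : Matrix (Fin n) (Fin n) ℝ} (hA : A.PosSemidef) :
    psdSqrt A * psdSqrt A = A := by
  rw [psdSqrt, dif_pos hA]
  set U : Matrix (Fin n) (Fin n) ℝ := hA.1.eigenvectorUnitary.1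
  have hU : star U * U = 1 := Matrix.mem_unitaryGroup_iff'.mp hA.1.eigenvectorUnitary.2
  set D := diagonal (fun i => Real.sqrt (hA.1.eigenvalues i))
  have hDD : D * D = diagonal (RCLike.ofReal ∘ hA.1.eigenvalues) := by
    rw [diagonal_mul_diagonal]
    congr 1
    funext i
    simp [Real.mul_self_sqrt (hA.eigenvalues_nonneg i)]
  have key : U * D * star U * (U * D * star U) = U * (D * D) * star U := by
    simp only [mul_assoc]
    rw [← mul_assoc (star U) U, hU, one_mul]
  rw [key, hDD]
  conv_rhs => rw [hA.1.spectral_theorem]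
  rfl

/-- The Frobenius norm of a square real matrix. -/
noncomputable def frobNorm {n : ℕ} (M : Matrix (Fin n) (Fin n) ℝ) : ℝ :=
  Real.sqrt (Mᵀ * M).trace

private lemma frob_trace_eq {n : ℕ} (M : Matrix (Fin n) (Fin n) ℝ) :
    (Mᵀ * M).trace = ∑ p : Fin n × Fin n, M p.1 p.2 ^ 2 := by
  rw [Fintype.sum_prod_type, Matrix.trace]
  simp only [Matrix.diag, Matrix.mul_apply, Matrix.transpose_apply, sq]
  exact Finset.sum_comm

private lemma frob_nonneg_trace {n : ℕ} (M : Matrix (Fin n) (Fin n) ℝ) :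
    0 ≤ (Mᵀ * M).trace := by
  rw [frob_trace_eq]
  positivity

/-- quadratic form bound: `|vᵀ M v| ≤ ‖M‖_F` for a unit vector `v`. -/
private lemma quad_abs_le_frobNorm {n : ℕ} (M : Matrix (Fin n) (Fin n) ℝ)
    (v : Fin n → ℝ) (hv : ∑ j, v j ^ 2 = 1) :
    |v ⬝ᵥ (M *ᵥ v)| ≤ frobNorm M := by
  have hq : v ⬝ᵥ (M *ᵥ v) = ∑ p : Fin n × Fin n, (v p.1 * v p.2) * M p.1 p.2 := by
    rw [Fintype.sum_prod_type]
    simp only [dotProduct, Matrix.mulVec, Finset.mul_sum]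
    exact Finset.sum_congr rfl fun i _ => Finset.sum_congr rfl fun j _ => by ring
  have hcs := Finset.sum_mul_sq_le_sq_mul_sq Finset.univ
    (fun p : Fin n × Fin n => v p.1 * v p.2) (fun p : Fin n × Fin n => M p.1 p.2)
  have hv2 : ∑ p : Fin n × Fin n, (v p.1 * v p.2) ^ 2 = 1 := by
    rw [← Finset.univ_product_univ, Finset.sum_product]
    simp only [mul_pow]
    rw [← Finset.sum_mul_sum]
    · rw [hv]; ring
  rw [hv2, one_mul] at hcs
  have h1 : |v ⬝ᵥ (M *ᵥ v)| = Real.sqrt ((v ⬝ᵥ (M *ᵥ v)) ^ 2) := by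
    rw [Real.sqrt_sq_eq_abs]
  rw [h1, frobNorm, frob_trace_eq]
  exact Real.sqrt_le_sqrt (by rw [hq]; exact hcs)

private lemma trace_sq_eq_sum_eigenvalues_sq {n : ℕ} {C : Matrix (Fin n) (Fin n) ℝ}
    (hC : C.IsHermitian) :
    (C * C).trace = ∑ i, hC.eigenvalues i ^ 2 := by
  set U : Matrix (Fin n) (Fin n) ℝ := (hC.eigenvectorUnitary : Matrix (Fin n) (Fin n) ℝ)
  have hU : star U * U = 1 := Matrix.mem_unitaryGroup_iff'.mp hC.eigenvectorUnitary.2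
  set D : Matrix (Fin n) (Fin n) ℝ := diagonal (RCLike.ofReal ∘ hC.eigenvalues)
  have hspec : C = U * D * star U := hC.spectral_theorem
  have key : C * C = U * (D * (D * star U)) := by
    rw [hspec]
    simp only [mul_assoc]
    rw [show star U * (U * (D * star U)) = D * star U from by
      rw [← mul_assoc, hU, one_mul]]
  have : (C * C).trace = (D * D).trace := by
    rw [key, ← mul_assoc, ← mul_assoc, Matrix.trace_mul_comm,
      show star U * (U * D * D) = D * D from by
        rw [← mul_assoc, ← mul_assoc, hU, one_mul]]
  rw [this]
  simp [D, Matrix.diagonal_mul_diagonal, Matrix.trace, Matrix.diag, sq]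

/-- For real symmetric PSD `m × m` matrices `A`, `B`:
`‖A^{1/2} − B^{1/2}‖_F² ≤ m · ‖A − B‖_F`. -/
theorem frobenius_sqrt_diff_sq_le {m : ℕ}
    (A B : Matrix (Fin m) (Fin m) ℝ) (hA : A.PosSemidef) (hB : B.PosSemidef) :
    frobNorm (psdSqrt A - psdSqrt B) ^ 2 ≤ (m : ℝ) * frobNorm (A - B) := by
  rcases Nat.eq_zero_or_pos m with hm | hm
  · subst hm
    simp [frobNorm, Matrix.trace]
  -- setup
  set S := psdSqrt A with hSdef
  set T := psdSqrt B with hTdef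
  have hpsdA : psdSqrt A = S := rfl
  have hpsdB : psdSqrt B = T := rfl
  set C := S - T with hCdef
  have hCherm : C.IsHermitian :=
    ((psdSqrt_posSemidef hA).isHermitian).sub ((psdSqrt_posSemidef hB).isHermitian)
  have hCT : Cᵀ = C := by
    have := hCherm.eq
    rwa [Matrix.conjTranspose_eq_transpose_of_trivial] at this
  -- frobNorm C ^ 2 = trace (C * C) = ∑ eigenvalues²
  have htr : (Cᵀ * C).trace = ∑ i, hCherm.eigenvalues i ^ 2 := by
    rw [hCT]; exact trace_sq_eq_sum_eigenvalues_sq hCherm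
  have hfrobC : frobNorm C ^ 2 = ∑ i, hCherm.eigenvalues i ^ 2 := by
    rw [frobNorm, Real.sq_sqrt (frob_nonneg_trace C), htr]
  -- pick eigenvalue of maximal square
  obtain ⟨i0, _, hmax⟩ := Finset.exists_max_image Finset.univ
    (fun i => hCherm.eigenvalues i ^ 2) (Finset.univ_nonempty_iff.mpr ⟨⟨0, hm⟩⟩)
  set lam := hCherm.eigenvalues i0 with hlam
  set v : Fin m → ℝ := ⇑(hCherm.eigenvectorBasis i0) with hvdef
  -- v is a unit vector
  have hvnorm : ∑ j, v j ^ 2 = 1 := by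
    have h1 : ‖hCherm.eigenvectorBasis i0‖ = 1 := hCherm.eigenvectorBasis.orthonormal.1 i0
    have h2 : ‖hCherm.eigenvectorBasis i0‖ ^ 2 = ∑ j, v j ^ 2 := by
      rw [EuclideanSpace.norm_eq, Real.sq_sqrt (by positivity)]
      exact Finset.sum_congr rfl fun j _ => by
        rw [Real.norm_eq_abs, sq_abs]
    rw [← h2, h1, one_pow]
  have hvv : v ⬝ᵥ v = 1 := by
    rw [dotProduct, ← hvnorm]
    exact Finset.sum_congr rfl fun j _ => (sq (v j)).symm
  -- eigen equation
  have hev : C *ᵥ v = lam • v := hCherm.mulVec_eigenvectorBasis i0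
  -- quadratic forms
  set qS := v ⬝ᵥ (S *ᵥ v) with hqS
  set qT := v ⬝ᵥ (T *ᵥ v) with hqT
  have hqSnn : 0 ≤ qS := by
    have := (psdSqrt_posSemidef hA).dotProduct_mulVec_nonneg v
    simpa using this
  have hqTnn : 0 ≤ qT := by
    have := (psdSqrt_posSemidef hB).dotProduct_mulVec_nonneg v
    simpa using this
  have hqC : v ⬝ᵥ (C *ᵥ v) = lam := by
    rw [hev, dotProduct_smul, smul_eq_mul, hvv, mul_one]
  have hqCsub : v ⬝ᵥ (C *ᵥ v) = qS - qT := by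
    rw [hCdef, Matrix.sub_mulVec, dotProduct_sub]
  -- A - B = S * C + C * T
  have hAB : A - B = S * C + C * T := by
    have h1 : S * C + C * T = S * S - T * T := by
      rw [hCdef, Matrix.mul_sub, Matrix.sub_mul]
      abel
    rw [h1, psdSqrt_mul_self hA, psdSqrt_mul_self hB]
  -- q(A-B) = lam * (qS + qT)
  have hqAB : v ⬝ᵥ ((A - B) *ᵥ v) = lam * (qS + qT) := by
    rw [hAB, Matrix.add_mulVec, dotProduct_add]
    have h1 : v ⬝ᵥ ((S * C) *ᵥ v) = lam * qS := by
      rw [← Matrix.mulVec_mulVec, hev, Matrix.mulVec_smul, dotProduct_smul,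
        smul_eq_mul]
    have h2 : v ⬝ᵥ ((C * T) *ᵥ v) = lam * qT := by
      rw [← Matrix.mulVec_mulVec, Matrix.dotProduct_mulVec, ← Matrix.mulVec_transpose,
        hCT, hev, smul_dotProduct, smul_eq_mul]
    rw [h1, h2]; ring
  -- |lam| ≤ qS + qT
  have hlamle : |lam| ≤ qS + qT := by
    rw [← hqC, hqCsub]
    calc |qS - qT| ≤ |qS| + |qT| := abs_sub _ _
      _ = qS + qT := by rw [abs_of_nonneg hqSnn, abs_of_nonneg hqTnn]
  -- lam² ≤ frobNorm (A - B)
  have hlamsq : lam ^ 2 ≤ frobNorm (A - B) := by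
    have h1 : |v ⬝ᵥ ((A - B) *ᵥ v)| ≤ frobNorm (A - B) :=
      quad_abs_le_frobNorm (A - B) v hvnorm
    have h2 : |v ⬝ᵥ ((A - B) *ᵥ v)| = |lam| * (qS + qT) := by
      rw [hqAB, abs_mul, abs_of_nonneg (by linarith : (0:ℝ) ≤ qS + qT)]
    have h3 : lam ^ 2 ≤ |lam| * (qS + qT) := by
      have : lam ^ 2 = |lam| * |lam| := by rw [← abs_mul, abs_mul_self, sq]
      rw [this]
      exact mul_le_mul_of_nonneg_left hlamle (abs_nonneg _)
    linarith [h2 ▸ h1]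
  -- conclude
  rw [hfrobC]
  calc ∑ i, hCherm.eigenvalues i ^ 2
      ≤ ∑ _i : Fin m, lam ^ 2 :=
        Finset.sum_le_sum fun i _ => hmax i (Finset.mem_univ i)
    _ = (m : ℝ) * lam ^ 2 := by rw [Finset.sum_const]; simp [mul_comm]
    _ ≤ (m : ℝ) * frobNorm (A - B) :=
        mul_le_mul_of_nonneg_left hlamsq (by positivity)
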